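/- arXiv:0710.3263 — 2 statements merged into one kernel-verified Lean document; each statement's English description precedes it below -/
import Mathlib

section
/- Let R be a discrete valuation ring with maximal ideal 𝔭 and valuation v, and let (c1,c2,c3) be a triple of nonnegative integers satisfying c1 ≤ c3, c2 ≤ c3, and c3 ≤ c1 + c2. Then the set C_c = {g ∈ GL(3,R) : v(g21) ≥ c1, v(g32) ≥ c2, v(g31) ≥ c3} is a subgroup of GL(3,R). -/
open scoped MatrixGroups

section aux
variable {R : Type} [CommRing R] [IsDomain R] [IsDiscreteValuationRing R]

open IsDiscreteValuationRing

lemma aux_mul {a b : R} {m n : ℕ} (ha : (m : ℕ∞) ≤ addVal R a)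
    (hb : (n : ℕ∞) ≤ addVal R b) :
    ((m + n : ℕ) : ℕ∞) ≤ addVal R (a * b) := by
  rw [addVal_mul, Nat.cast_add]
  exact add_le_add ha hb

lemma aux_add {a b : R} {m : ℕ} (ha : (m : ℕ∞) ≤ addVal R a)
    (hb : (m : ℕ∞) ≤ addVal R b) :
    (m : ℕ∞) ≤ addVal R (a + b) :=
  le_trans (le_min ha hb) ((addVal R).map_add a b)

lemma aux_unit {u a : R} (hu : IsUnit u) : addVal R (u * a) = addVal R a := by
  have h0 : addVal R u = 0 := by
    have h1 : addVal R u ≤ addVal R 1 := addVal_le_iff_dvd.mpr hu.dvd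
    rw [addVal_one] at h1
    exact le_antisymm h1 zero_le
  rw [addVal_mul, h0, zero_add]

lemma aux_neg {a : R} {m : ℕ} (ha : (m : ℕ∞) ≤ addVal R a) :
    (m : ℕ∞) ≤ addVal R (-a) := by
  rw [show -a = (-1 : R) * a by ring, aux_unit isUnit_one.neg]
  exact ha

lemma aux_mono {a : R} {m n : ℕ} (hmn : m ≤ n) (ha : (n : ℕ∞) ≤ addVal R a) :
    (m : ℕ∞) ≤ addVal R a :=
  le_trans (Nat.cast_le.mpr hmn) ha

end aux

section aux2
variable {R : Type} [CommRing R] [IsDomain R] [IsDiscreteValuationRing R]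
open IsDiscreteValuationRing

lemma aux_mul_left {a b : R} {m : ℕ} (ha : (m : ℕ∞) ≤ addVal R a) :
    (m : ℕ∞) ≤ addVal R (a * b) := by
  rw [addVal_mul]; exact le_trans ha le_self_add

lemma aux_mul_right {a b : R} {m : ℕ} (hb : (m : ℕ∞) ≤ addVal R b) :
    (m : ℕ∞) ≤ addVal R (a * b) := by
  rw [addVal_mul]; exact le_trans hb le_add_self

lemma aux_adj10 (A : Matrix (Fin 3) (Fin 3) R) :
    A.adjugate 1 0 = -(A 1 0 * A 2 2) + A 1 2 * A 2 0 := by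
  rw [Matrix.adjugate_fin_three]; simp

lemma aux_adj21 (A : Matrix (Fin 3) (Fin 3) R) :
    A.adjugate 2 1 = -(A 0 0 * A 2 1) + A 0 1 * A 2 0 := by
  rw [Matrix.adjugate_fin_three]; simp

lemma aux_adj20 (A : Matrix (Fin 3) (Fin 3) R) :
    A.adjugate 2 0 = A 1 0 * A 2 1 - A 1 1 * A 2 0 := by
  rw [Matrix.adjugate_fin_three]; simp

end aux2

section main
open IsDiscreteValuationRing

/-- For a discrete valuation ring `R` with additive valuation `v` and nonnegative integers
`c1 ≤ c3`, `c2 ≤ c3`, `c3 ≤ c1 + c2`, the set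
`C_c = {g ∈ GL(3,R) : v(g21) ≥ c1, v(g32) ≥ c2, v(g31) ≥ c3}` is a subgroup of `GL(3,R)`. -/
theorem Cc_is_subgroup (R : Type) [CommRing R] [IsDomain R] [IsDiscreteValuationRing R]
    (c1 c2 c3 : ℕ) (h13 : c1 ≤ c3) (h23 : c2 ≤ c3) (h3 : c3 ≤ c1 + c2) :
    ∃ H : Subgroup (GL (Fin 3) R),
      (H : Set (GL (Fin 3) R)) =
        {g : GL (Fin 3) R | (c1 : ℕ∞) ≤ IsDiscreteValuationRing.addVal R ((g : Matrix (Fin 3) (Fin 3) R) 1 0) ∧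
             (c2 : ℕ∞) ≤ IsDiscreteValuationRing.addVal R ((g : Matrix (Fin 3) (Fin 3) R) 2 1) ∧
             (c3 : ℕ∞) ≤ IsDiscreteValuationRing.addVal R ((g : Matrix (Fin 3) (Fin 3) R) 2 0)} := by
  refine ⟨{
    carrier := {g : GL (Fin 3) R |
      (c1 : ℕ∞) ≤ addVal R ((g : Matrix (Fin 3) (Fin 3) R) 1 0) ∧
      (c2 : ℕ∞) ≤ addVal R ((g : Matrix (Fin 3) (Fin 3) R) 2 1) ∧
      (c3 : ℕ∞) ≤ addVal R ((g : Matrix (Fin 3) (Fin 3) R) 2 0)}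
    one_mem' := ?_
    mul_mem' := ?_
    inv_mem' := ?_ }, ?_⟩
  · intro a b ha hb
    obtain ⟨ha1, ha2, ha3⟩ := ha
    obtain ⟨hb1, hb2, hb3⟩ := hb
    have key : ∀ i j : Fin 3,
        ((a * b : GL (Fin 3) R) : Matrix (Fin 3) (Fin 3) R) i j =
          (a : Matrix (Fin 3) (Fin 3) R) i 0 * (b : Matrix (Fin 3) (Fin 3) R) 0 j +
          (a : Matrix (Fin 3) (Fin 3) R) i 1 * (b : Matrix (Fin 3) (Fin 3) R) 1 j +
          (a : Matrix (Fin 3) (Fin 3) R) i 2 * (b : Matrix (Fin 3) (Fin 3) R) 2 j := by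
      intro i j
      rw [Units.val_mul, Matrix.mul_apply, Fin.sum_univ_three]
    refine ⟨?_, ?_, ?_⟩
    · rw [key]
      exact aux_add (aux_add (aux_mul_left ha1) (aux_mul_right hb1))
        (aux_mono h13 (aux_mul_right hb3))
    · rw [key]
      exact aux_add (aux_add (aux_mono h23 (aux_mul_left ha3)) (aux_mul_left ha2))
        (aux_mul_right hb2)
    · rw [key]
      exact aux_add (aux_add (aux_mul_left ha3)
        (aux_mono (by omega) (aux_mul ha2 hb1))) (aux_mul_right hb3)
  · refine ⟨?_, ?_, ?_⟩ <;>
      · show (_ : ℕ∞) ≤ addVal R ((1 : Matrix (Fin 3) (Fin 3) R) _ _)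
        rw [Matrix.one_apply_ne (by decide), addVal_zero]
        exact le_top
  · intro a ha
    obtain ⟨ha1, ha2, ha3⟩ := ha
    set A : Matrix (Fin 3) (Fin 3) R := (a : Matrix (Fin 3) (Fin 3) R) with hA
    have hdet : IsUnit A.det := (Matrix.isUnit_iff_isUnit_det A).mp a.isUnit
    have hu : IsUnit (Ring.inverse A.det) := isUnit_ringInverse.mpr hdet
    have key : ∀ i j : Fin 3,
        ((a⁻¹ : GL (Fin 3) R) : Matrix (Fin 3) (Fin 3) R) i j =
          Ring.inverse A.det * A.adjugate i j := by
      intro i j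
      rw [Matrix.coe_units_inv a, ← hA, Matrix.inv_def, Matrix.smul_apply, smul_eq_mul]
    refine ⟨?_, ?_, ?_⟩
    · rw [key, aux_unit hu, aux_adj10]
      exact aux_add (aux_neg (aux_mul_left ha1)) (aux_mono h13 (aux_mul_right ha3))
    · rw [key, aux_unit hu, aux_adj21]
      exact aux_add (aux_neg (aux_mul_right ha2)) (aux_mono h23 (aux_mul_right ha3))
    · rw [key, aux_unit hu, aux_adj20, sub_eq_add_neg]
      exact aux_add (aux_mono h3 (aux_mul ha1 ha2)) (aux_neg (aux_mul_right ha3))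
  · ext g
    simp only [SetLike.mem_coe, Subgroup.mem_mk, Set.mem_setOf_eq]
    exact Iff.rfl

end main
end

section
/- Let p be prime, n ≥ 1, and let c = (c1,c2,c3) satisfy 1 ≤ c1, 1 ≤ c2, c1 ≤ c3, c2 ≤ c3, c3 ≤ c1 + c2, with c3 = n. Let G = GL(3, ℤ/pⁿℤ) and let C̄_c = {g ∈ G : g21 ≡ 0 mod p^{c1}, g32 ≡ 0 mod p^{c2}, g31 ≡ 0 mod p^{c3}}. Then the index [G : C̄_c] equals (p+1)(p²+p+1)·p^{c1+c2+c3−3}. -/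
open scoped MatrixGroups

namespace IndexCcAux

variable {p n : ℕ}

/-- Units of a monoid are equivalent to the subtype of unit elements. -/
noncomputable def unitsEquivSubtype (M : Type*) [Monoid M] : Mˣ ≃ {x : M // IsUnit x} where
  toFun u := ⟨u, u.isUnit⟩
  invFun x := x.2.unit
  left_inv u := Units.ext u.isUnit.unit_spec
  right_inv x := Subtype.ext x.2.unit_spec

lemma dvd_iff_dvd_val (hp : p.Prime) (c : ℕ) (hc : c ≤ n) (x : ZMod (p ^ n)) :
    (p : ZMod (p ^ n)) ^ c ∣ x ↔ p ^ c ∣ x.val := by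
  haveI : NeZero (p ^ n) := ⟨pow_ne_zero _ hp.pos.ne'⟩
  constructor
  · rintro ⟨y, rfl⟩
    have h1 : ((p : ZMod (p^n)) ^ c * y).val = p ^ c * y.val % p ^ n := by
      rw [← Nat.cast_pow, ZMod.val_mul, ZMod.val_natCast, Nat.mod_mul_mod]
    rw [h1]
    exact (Nat.dvd_mod_iff (pow_dvd_pow p hc)).2 ⟨y.val, rfl⟩
  · rintro ⟨m, hm⟩
    refine ⟨(m : ZMod (p^n)), ?_⟩
    have : ((x.val : ℕ) : ZMod (p^n)) = x := by rw [ZMod.natCast_val, ZMod.cast_id]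
    rw [← this, hm]; push_cast; ring

lemma card_dvd_subtype (hp : p.Prime) (c : ℕ) (hc : c ≤ n) :
    Nat.card {x : ZMod (p ^ n) // (p : ZMod (p ^ n)) ^ c ∣ x} = p ^ (n - c) := by
  haveI : NeZero (p ^ n) := ⟨pow_ne_zero _ hp.pos.ne'⟩
  have key := dvd_iff_dvd_val hp c hc
  have hpc : 0 < p ^ c := pow_pos hp.pos c
  let f : Fin (p ^ (n - c)) → {x : ZMod (p ^ n) // (p : ZMod (p ^ n)) ^ c ∣ x} :=
    fun k => ⟨((p ^ c * (k : ℕ) : ℕ) : ZMod (p ^ n)), (key _).2 (by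
      rw [ZMod.val_natCast]
      exact (Nat.dvd_mod_iff (pow_dvd_pow p hc)).2 ⟨k, rfl⟩)⟩
  have hbij : Function.Bijective f := by
    constructor
    · intro a b hab
      have h0 : ((p ^ c * (a : ℕ) : ℕ) : ZMod (p ^ n)) = ((p ^ c * (b : ℕ) : ℕ) : ZMod (p ^ n)) :=
        congrArg Subtype.val hab
      have ha : p ^ c * (a : ℕ) < p ^ n := by
        calc p ^ c * (a : ℕ) < p ^ c * p ^ (n - c) :=
              Nat.mul_lt_mul_of_le_of_lt le_rfl a.2 hpc
        _ = p ^ n := by rw [← pow_add]; congr 1; omega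
      have hb : p ^ c * (b : ℕ) < p ^ n := by
        calc p ^ c * (b : ℕ) < p ^ c * p ^ (n - c) :=
              Nat.mul_lt_mul_of_le_of_lt le_rfl b.2 hpc
        _ = p ^ n := by rw [← pow_add]; congr 1; omega
      have := congrArg ZMod.val h0
      rw [ZMod.val_natCast_of_lt ha, ZMod.val_natCast_of_lt hb] at this
      exact Fin.ext (Nat.eq_of_mul_eq_mul_left hpc this)
    · rintro ⟨x, hx⟩
      obtain ⟨m, hm⟩ := (key x).1 hx
      have hmlt : m < p ^ (n - c) := by
        have hv : x.val < p ^ n := ZMod.val_lt x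
        rw [hm] at hv
        by_contra h
        push_neg at h
        have : p ^ n ≤ p ^ c * m := by
          calc p ^ n = p ^ c * p ^ (n - c) := by rw [← pow_add]; congr 1; omega
          _ ≤ p ^ c * m := Nat.mul_le_mul_left _ h
        omega
      refine ⟨⟨m, hmlt⟩, ?_⟩
      apply Subtype.ext
      show ((p ^ c * m : ℕ) : ZMod (p ^ n)) = x
      rw [← hm, ZMod.natCast_val, ZMod.cast_id]
  rw [← Nat.card_congr (Equiv.ofBijective f hbij), Nat.card_eq_fintype_card, Fintype.card_fin]

lemma isUnit_iff_cast (hp : p.Prime) (hn : 1 ≤ n) (x : ZMod (p ^ n)) :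
    IsUnit x ↔ IsUnit ((ZMod.castHom (dvd_pow_self p (by omega : n ≠ 0)) (ZMod p)) x) := by
  haveI : NeZero (p ^ n) := ⟨pow_ne_zero _ hp.pos.ne'⟩
  haveI : Fact p.Prime := ⟨hp⟩
  constructor
  · exact fun h => h.map _
  · intro h
    have hx : ((x.val : ℕ) : ZMod (p^n)) = x := by rw [ZMod.natCast_val, ZMod.cast_id]
    rw [← hx, ZMod.isUnit_iff_coprime, Nat.coprime_pow_right_iff (by omega : 0 < n),
      Nat.coprime_comm, Nat.Prime.coprime_iff_not_dvd hp]
    intro hc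
    apply h.ne_zero
    rw [← hx, map_natCast]
    exact (ZMod.natCast_eq_zero_iff _ _).2 hc

lemma isUnit_add_p_mul (hp : p.Prime) (hn : 1 ≤ n) (a z : ZMod (p ^ n)) :
    IsUnit (a + (p : ZMod (p ^ n)) * z) ↔ IsUnit a := by
  haveI : Fact p.Prime := ⟨hp⟩
  rw [isUnit_iff_cast hp hn, isUnit_iff_cast hp hn a, map_add, map_mul, map_natCast]
  simp [ZMod.natCast_self]

lemma cast_eq_zero_iff_dvd (hp : p.Prime) (hn : 1 ≤ n) (x : ZMod (p ^ n)) :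
    (ZMod.castHom (dvd_pow_self p (by omega : n ≠ 0)) (ZMod p)) x = 0 ↔
      (p : ZMod (p ^ n)) ^ 1 ∣ x := by
  haveI : NeZero (p ^ n) := ⟨pow_ne_zero _ hp.pos.ne'⟩
  haveI : Fact p.Prime := ⟨hp⟩
  have hx : ((x.val : ℕ) : ZMod (p^n)) = x := by rw [ZMod.natCast_val, ZMod.cast_id]
  rw [dvd_iff_dvd_val hp 1 hn, pow_one]
  conv_lhs => rw [← hx, map_natCast]
  exact ZMod.natCast_eq_zero_iff _ _

lemma card_fiber (hp : p.Prime) (hn : 1 ≤ n) (a : ZMod p) :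
    Nat.card {x : ZMod (p ^ n) //
      (ZMod.castHom (dvd_pow_self p (by omega : n ≠ 0)) (ZMod p)) x = a} = p ^ (n - 1) := by
  haveI : NeZero (p ^ n) := ⟨pow_ne_zero _ hp.pos.ne'⟩
  haveI : Fact p.Prime := ⟨hp⟩
  set φ := ZMod.castHom (dvd_pow_self p (by omega : n ≠ 0)) (ZMod p) with hφ
  set x0 : ZMod (p ^ n) := ((a.val : ℕ) : ZMod (p ^ n)) with hx0
  have hφx0 : φ x0 = a := by
    rw [hx0, map_natCast, ZMod.natCast_val, ZMod.cast_id]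
  have e : {x : ZMod (p ^ n) // φ x = a} ≃ {x : ZMod (p ^ n) // φ x = 0} :=
    { toFun := fun x => ⟨x.1 - x0, by rw [map_sub, x.2, hφx0, sub_self]⟩
      invFun := fun x => ⟨x.1 + x0, by rw [map_add, x.2, hφx0, zero_add]⟩
      left_inv := fun x => by simp
      right_inv := fun x => by simp }
  rw [Nat.card_congr e, Nat.card_congr (Equiv.subtypeEquivRight
    (fun x => cast_eq_zero_iff_dvd hp hn x)), card_dvd_subtype hp 1 hn]

lemma card_units_zmod (hp : p.Prime) (hn : 1 ≤ n) :
    Nat.card {x : ZMod (p ^ n) // IsUnit x} = p ^ (n - 1) * (p - 1) := by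
  haveI : NeZero (p ^ n) := ⟨pow_ne_zero _ hp.pos.ne'⟩
  rw [← Nat.card_congr (unitsEquivSubtype (ZMod (p ^ n))), Nat.card_eq_fintype_card,
    ZMod.card_units_eq_totient, Nat.totient_prime_pow hp (by omega)]

lemma card_true (hp : p.Prime) :
    Nat.card {x : ZMod (p ^ n) // True} = p ^ n := by
  haveI : NeZero (p ^ n) := ⟨pow_ne_zero _ hp.pos.ne'⟩
  rw [Nat.card_congr (Equiv.subtypeUnivEquiv (fun _ => trivial)), Nat.card_eq_fintype_card,
    ZMod.card]

end IndexCcAux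
namespace IndexCcAux

variable {p n : ℕ}

lemma isUnit_matrix_iff (hp : p.Prime) (hn : 1 ≤ n) {c1 c2 c3 : ℕ}
    (hc1 : 1 ≤ c1) (hc2 : 1 ≤ c2) (hc3 : 1 ≤ c3)
    (M : Matrix (Fin 3) (Fin 3) (ZMod (p ^ n)))
    (h1 : (p : ZMod (p ^ n)) ^ c1 ∣ M 1 0) (h2 : (p : ZMod (p ^ n)) ^ c2 ∣ M 2 1)
    (h3 : (p : ZMod (p ^ n)) ^ c3 ∣ M 2 0) :
    IsUnit M ↔ (IsUnit (M 0 0) ∧ IsUnit (M 1 1) ∧ IsUnit (M 2 2)) := by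
  obtain ⟨u, hu⟩ : (p : ZMod (p ^ n)) ∣ M 1 0 :=
    dvd_trans (dvd_pow_self _ (by omega : c1 ≠ 0)) h1
  obtain ⟨v, hv⟩ : (p : ZMod (p ^ n)) ∣ M 2 1 :=
    dvd_trans (dvd_pow_self _ (by omega : c2 ≠ 0)) h2
  obtain ⟨w, hw⟩ : (p : ZMod (p ^ n)) ∣ M 2 0 :=
    dvd_trans (dvd_pow_self _ (by omega : c3 ≠ 0)) h3
  have hdet : M.det = M 0 0 * M 1 1 * M 2 2 + (p : ZMod (p ^ n)) *
      (-(M 0 0 * M 1 2 * v) - M 0 1 * u * M 2 2 + M 0 1 * M 1 2 * w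
        + M 0 2 * u * ((p : ZMod (p ^ n)) * v) - M 0 2 * M 1 1 * w) := by
    rw [Matrix.det_fin_three, hu, hv, hw]; ring
  rw [Matrix.isUnit_iff_isUnit_det, hdet, isUnit_add_p_mul hp hn,
    IsUnit.mul_iff, IsUnit.mul_iff, and_assoc]

end IndexCcAux
namespace IndexCcAux

variable {p n : ℕ}

lemma card_cond (hp : p.Prime) (hn : 1 ≤ n) {c1 c2 c3 : ℕ}
    (hc1 : 1 ≤ c1) (hc2 : 1 ≤ c2) (hc3 : 1 ≤ c3)
    (h1n : c1 ≤ n) (h2n : c2 ≤ n) (h3n : c3 ≤ n) :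
    Nat.card {g : GL (Fin 3) (ZMod (p ^ n)) //
        (p : ZMod (p ^ n))^c1 ∣ (g : Matrix (Fin 3) (Fin 3) (ZMod (p ^ n))) 1 0 ∧
        (p : ZMod (p ^ n))^c2 ∣ (g : Matrix (Fin 3) (Fin 3) (ZMod (p ^ n))) 2 1 ∧
        (p : ZMod (p ^ n))^c3 ∣ (g : Matrix (Fin 3) (Fin 3) (ZMod (p ^ n))) 2 0} =
      (p ^ (n-1) * (p-1))^3 * (p ^ n)^3 * p ^ (n - c1) * p ^ (n - c2) * p ^ (n - c3) := by
  haveI : NeZero (p ^ n) := ⟨pow_ne_zero _ hp.pos.ne'⟩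
  set R := ZMod (p ^ n) with hR
  set P : Matrix (Fin 3) (Fin 3) R → Prop := fun M =>
    (p : R)^c1 ∣ M 1 0 ∧ (p : R)^c2 ∣ M 2 1 ∧ (p : R)^c3 ∣ M 2 0 with hP
  set Q : Fin 3 → Fin 3 → R → Prop := fun i j =>
    ![![fun x => IsUnit x, fun _ => True, fun _ => True],
      ![fun x => (p:R)^c1 ∣ x, fun x => IsUnit x, fun _ => True],
      ![fun x => (p:R)^c3 ∣ x, fun x => (p:R)^c2 ∣ x, fun x => IsUnit x]] i j with hQ
  have e1 : {g : GL (Fin 3) R // P (g : Matrix (Fin 3) (Fin 3) R)} ≃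
      {M : Matrix (Fin 3) (Fin 3) R // IsUnit M ∧ P M} :=
    ((unitsEquivSubtype (Matrix (Fin 3) (Fin 3) R)).subtypeEquiv
      (fun u => Iff.rfl)).trans (Equiv.subtypeSubtypeEquivSubtypeInter _ _)
  have hiff : ∀ M : Matrix (Fin 3) (Fin 3) R, (IsUnit M ∧ P M) ↔ ∀ i j, Q i j (M i j) := by
    intro M
    constructor
    · rintro ⟨hU, hd1, hd2, hd3⟩
      obtain ⟨u0, u1, u2⟩ := (isUnit_matrix_iff hp hn hc1 hc2 hc3 M hd1 hd2 hd3).1 hU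
      intro i j
      fin_cases i <;> fin_cases j <;> simp [hQ, Matrix.vecHead, Matrix.vecTail] <;> assumption
    · intro hQall
      have q00 := hQall 0 0
      have q11 := hQall 1 1
      have q22 := hQall 2 2
      have q10 := hQall 1 0
      have q21 := hQall 2 1
      have q20 := hQall 2 0
      simp [hQ, Matrix.vecHead, Matrix.vecTail] at q00 q11 q22 q10 q21 q20
      exact ⟨(isUnit_matrix_iff hp hn hc1 hc2 hc3 M q10 q21 q20).2 ⟨q00, q11, q22⟩,
        q10, q21, q20⟩
  have e2 : {M : Matrix (Fin 3) (Fin 3) R // IsUnit M ∧ P M} ≃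
      {M : Matrix (Fin 3) (Fin 3) R // ∀ i j, Q i j (M i j)} :=
    Equiv.subtypeEquivRight hiff
  have e3 : {M : Matrix (Fin 3) (Fin 3) R // ∀ i j, Q i j (M i j)} ≃
      ∀ i : Fin 3, {r : Fin 3 → R // ∀ j, Q i j (r j)} :=
    @Equiv.subtypePiEquivPi (Fin 3) (fun _ => Fin 3 → R) (fun i r => ∀ j, Q i j (r j))
  have e4 : (∀ i : Fin 3, {r : Fin 3 → R // ∀ j, Q i j (r j)}) ≃
      ∀ i : Fin 3, ∀ j : Fin 3, {x : R // Q i j x} :=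
    Equiv.piCongrRight (fun i => Equiv.subtypePiEquivPi)
  rw [Nat.card_congr (((e1.trans e2).trans e3).trans e4), Nat.card_pi]
  have hinner : ∀ i : Fin 3, Nat.card (∀ j : Fin 3, {x : R // Q i j x}) =
      ∏ j : Fin 3, Nat.card {x : R // Q i j x} := fun i => Nat.card_pi
  rw [Finset.prod_congr rfl (fun i _ => hinner i), Fin.prod_univ_three]
  rw [Fin.prod_univ_three (fun j => Nat.card {x : R // Q 0 j x}),
    Fin.prod_univ_three (fun j => Nat.card {x : R // Q 1 j x}),
    Fin.prod_univ_three (fun j => Nat.card {x : R // Q 2 j x})]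
  simp only [hQ]
  simp only [Matrix.cons_val_zero, Matrix.cons_val_one, Matrix.head_cons,
    Matrix.cons_val_two, Matrix.tail_cons, Matrix.head_fin_const]
  rw [card_units_zmod hp hn, card_dvd_subtype hp c1 h1n, card_dvd_subtype hp c2 h2n,
    card_dvd_subtype hp c3 h3n, card_true hp]
  ring
end IndexCcAux
namespace IndexCcAux

variable {p n : ℕ}

lemma card_GL_zmod (hp : p.Prime) (hn : 1 ≤ n) :
    Nat.card (GL (Fin 3) (ZMod (p ^ n))) =
      ((p^3 - 1) * (p^3 - p) * (p^3 - p^2)) * (p ^ (n-1))^9 := by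
  haveI : NeZero (p ^ n) := ⟨pow_ne_zero _ hp.pos.ne'⟩
  haveI : Fact p.Prime := ⟨hp⟩
  set R := ZMod (p ^ n) with hR
  set φ : ZMod (p ^ n) →+* ZMod p :=
    ZMod.castHom (dvd_pow_self p (by omega : n ≠ 0)) (ZMod p) with hφ
  set Φ : GL (Fin 3) R →* GL (Fin 3) (ZMod p) :=
    Units.map (φ.mapMatrix).toMonoidHom with hΦ
  have hΦval : ∀ u : GL (Fin 3) R,
      ((Φ u : GL (Fin 3) (ZMod p)) : Matrix (Fin 3) (Fin 3) (ZMod p)) =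
        φ.mapMatrix (u : Matrix (Fin 3) (Fin 3) R) := fun u => rfl
  have hsurj : Function.Surjective Φ := by
    intro B
    set A : Matrix (Fin 3) (Fin 3) R :=
      fun i j => (((B : Matrix (Fin 3) (Fin 3) (ZMod p)) i j).val : R) with hA
    have hφA : φ.mapMatrix A = (B : Matrix (Fin 3) (Fin 3) (ZMod p)) := by
      ext i j
      rw [RingHom.mapMatrix_apply, Matrix.map_apply, hA]
      show φ ((((B : Matrix (Fin 3) (Fin 3) (ZMod p)) i j).val : ℕ) : R) = _
      rw [map_natCast, ZMod.natCast_val, ZMod.cast_id]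
    have hUA : IsUnit A := by
      rw [Matrix.isUnit_iff_isUnit_det, isUnit_iff_cast hp hn, RingHom.map_det, hφA]
      exact (Matrix.isUnit_iff_isUnit_det _).1 B.isUnit
    refine ⟨hUA.unit, ?_⟩
    apply Units.ext
    rw [hΦval, hUA.unit_spec, hφA]
  have hker : Nat.card Φ.ker = (p ^ (n-1))^9 := by
    have e1 : Φ.ker ≃ {u : GL (Fin 3) R //
        φ.mapMatrix (u : Matrix (Fin 3) (Fin 3) R) = 1} :=
      Equiv.subtypeEquivRight (by
        intro u
        rw [MonoidHom.mem_ker, Units.ext_iff, hΦval]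
        rfl)
    have e2 : {u : GL (Fin 3) R // φ.mapMatrix (u : Matrix (Fin 3) (Fin 3) R) = 1} ≃
        {M : Matrix (Fin 3) (Fin 3) R // IsUnit M ∧ φ.mapMatrix M = 1} :=
      ((unitsEquivSubtype (Matrix (Fin 3) (Fin 3) R)).subtypeEquiv
        (q := fun y : {M : Matrix (Fin 3) (Fin 3) R // IsUnit M} =>
          φ.mapMatrix (y : Matrix (Fin 3) (Fin 3) R) = 1)
        (fun u => Iff.rfl)).trans (Equiv.subtypeSubtypeEquivSubtypeInter
          (fun M : Matrix (Fin 3) (Fin 3) R => IsUnit M)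
          (fun M : Matrix (Fin 3) (Fin 3) R => φ.mapMatrix M = 1))
    have e3 : {M : Matrix (Fin 3) (Fin 3) R // IsUnit M ∧ φ.mapMatrix M = 1} ≃
        {M : Matrix (Fin 3) (Fin 3) R // φ.mapMatrix M = 1} :=
      Equiv.subtypeEquivRight (fun M => ⟨fun h => h.2, fun h => ⟨by
        rw [Matrix.isUnit_iff_isUnit_det, isUnit_iff_cast hp hn, RingHom.map_det, h,
          Matrix.det_one]
        exact isUnit_one, h⟩⟩)
    have e4 : {M : Matrix (Fin 3) (Fin 3) R // φ.mapMatrix M = 1} ≃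
        {M : Matrix (Fin 3) (Fin 3) R //
          ∀ i j, φ (M i j) = (1 : Matrix (Fin 3) (Fin 3) (ZMod p)) i j} :=
      Equiv.subtypeEquivRight (fun M => by
        constructor
        · intro h i j
          rw [← h, RingHom.mapMatrix_apply, Matrix.map_apply]
        · intro h
          ext i j
          rw [RingHom.mapMatrix_apply, Matrix.map_apply, h])
    have e5 : {M : Matrix (Fin 3) (Fin 3) R //
          ∀ i j, φ (M i j) = (1 : Matrix (Fin 3) (Fin 3) (ZMod p)) i j} ≃
        ∀ i : Fin 3, {r : Fin 3 → R //
          ∀ j, φ (r j) = (1 : Matrix (Fin 3) (Fin 3) (ZMod p)) i j} :=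
      @Equiv.subtypePiEquivPi (Fin 3) (fun _ => Fin 3 → R)
        (fun i r => ∀ j, φ (r j) = (1 : Matrix (Fin 3) (Fin 3) (ZMod p)) i j)
    have e6 : (∀ i : Fin 3, {r : Fin 3 → R //
          ∀ j, φ (r j) = (1 : Matrix (Fin 3) (Fin 3) (ZMod p)) i j}) ≃
        ∀ i : Fin 3, ∀ j : Fin 3, {x : R // φ x = (1 : Matrix (Fin 3) (Fin 3) (ZMod p)) i j} :=
      Equiv.piCongrRight (fun i => @Equiv.subtypePiEquivPi (Fin 3) (fun _ => R)
        (fun j x => φ x = (1 : Matrix (Fin 3) (Fin 3) (ZMod p)) i j))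
    rw [Nat.card_congr ((((e1.trans e2).trans e3).trans e4).trans (e5.trans e6)), Nat.card_pi]
    have hinner : ∀ i : Fin 3,
        Nat.card (∀ j : Fin 3, {x : R // φ x = (1 : Matrix (Fin 3) (Fin 3) (ZMod p)) i j}) =
          ∏ j : Fin 3, Nat.card {x : R // φ x = (1 : Matrix (Fin 3) (Fin 3) (ZMod p)) i j} :=
      fun i => Nat.card_pi
    rw [Finset.prod_congr rfl (fun i _ => hinner i)]
    have hfib : ∀ i j : Fin 3,
        Nat.card {x : R // φ x = (1 : Matrix (Fin 3) (Fin 3) (ZMod p)) i j} = p ^ (n - 1) :=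
      fun i j => card_fiber hp hn _
    calc (∏ i : Fin 3, ∏ j : Fin 3,
          Nat.card {x : R // φ x = (1 : Matrix (Fin 3) (Fin 3) (ZMod p)) i j})
        = ∏ _i : Fin 3, ∏ _j : Fin 3, p ^ (n-1) := by
          exact Finset.prod_congr rfl (fun i _ => Finset.prod_congr rfl (fun j _ => hfib i j))
      _ = (p ^ (n-1))^9 := by
          simp [Finset.prod_const]
          ring
  have hquot : Nat.card (GL (Fin 3) R ⧸ Φ.ker) = Nat.card (GL (Fin 3) (ZMod p)) :=
    Nat.card_congr (QuotientGroup.quotientKerEquivOfSurjective Φ hsurj).toEquiv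
  rw [Subgroup.card_eq_card_quotient_mul_card_subgroup Φ.ker, hquot, hker,
    Matrix.card_GL_field, ZMod.card, Fin.prod_univ_three]
  norm_num

end IndexCcAux
namespace IndexCcAux

lemma arith (p n c1 c2 c3 : ℕ) (hp2 : 2 ≤ p) (hn : 1 ≤ n) (h1 : 1 ≤ c1) (h2 : 1 ≤ c2)
    (h13 : c1 ≤ c3) (h23 : c2 ≤ c3) (h3n : c3 = n) :
    ((p + 1) * (p ^ 2 + p + 1) * p ^ (c1 + c2 + c3 - 3)) *
      ((p ^ (n-1) * (p-1))^3 * (p ^ n)^3 * p ^ (n - c1) * p ^ (n - c2) * p ^ (n - c3)) =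
    ((p^3 - 1) * (p^3 - p) * (p^3 - p^2)) * (p ^ (n-1))^9 := by
  rw [show c1 + c2 + c3 - 3 = c1 + c2 + n - 3 by omega,
    show n - c3 = n - n by omega]
  obtain ⟨a, ha⟩ := Nat.le.dest (show c1 ≤ n by omega)
  obtain ⟨b, hb⟩ := Nat.le.dest (show c2 ≤ n by omega)
  set q := p - 1 with hq'
  have hq : p = q + 1 := by omega
  set d3 := n - 1 with hd3'
  have hnd : n = d3 + 1 := by omega
  have s1 : p^3 - 1 = q * (p^2 + p + 1) := by
    have h : p^3 = q * (p^2 + p + 1) + 1 := by rw [hq]; ring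
    rw [h, Nat.add_sub_cancel]
  have s2 : p^3 - p = p * q * (p + 1) := by
    have h : p^3 = p * q * (p + 1) + p := by rw [hq]; ring
    rw [h, Nat.add_sub_cancel]
  have s3 : p^3 - p^2 = p^2 * q := by
    have h : p^3 = p^2 * q + p^2 := by rw [hq]; ring
    rw [h, Nat.add_sub_cancel]
  have e1 : n - c1 = a := by omega
  have e2 : n - c2 = b := by omega
  have e3 : n - n = 0 := by omega
  rw [s1, s2, s3, e1, e2, e3]
  have collapse : p^(c1 + c2 + n - 3) * p^(3*d3) * p^(3*n) * p^a * p^b =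
      p^(c1 + c2 + n - 3 + 3*d3 + 3*n + a + b) := by
    rw [← pow_add, ← pow_add, ← pow_add, ← pow_add]
  have hE : c1 + c2 + n - 3 + 3*d3 + 3*n + a + b = 3 + 9*d3 := by omega
  calc ((p + 1) * (p ^ 2 + p + 1) * p ^ (c1 + c2 + n - 3)) *
      ((p ^ d3 * q)^3 * (p ^ n)^3 * p ^ a * p ^ b * p ^ 0)
      = (p+1) * (p^2+p+1) * q^3 *
        (p^(c1 + c2 + n - 3) * p^(3*d3) * p^(3*n) * p^a * p^b) := by ring
    _ = (p+1) * (p^2+p+1) * q^3 * (p^3 * p^(9*d3)) := by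
        rw [collapse, hE, pow_add]
    _ = (q * (p^2+p+1)) * (p * q * (p+1)) * (p^2 * q) * (p^d3)^9 := by ring
end IndexCcAux

open scoped MatrixGroups
open IndexCcAux

/-- For `G = GL(3, ℤ/pⁿℤ)` and `c` with `1 ≤ c1, c2`, `c1, c2 ≤ c3 ≤ c1+c2`, `c3 = n`,
the index of `C̄_c = {g : g21 ≡ 0 mod p^c1, g32 ≡ 0 mod p^c2, g31 ≡ 0 mod p^c3}` in `G`
is `(p+1)(p²+p+1)·p^(c1+c2+c3−3)`. -/
theorem index_of_Cc_mod_pn (p : ℕ) (hp : p.Prime) (n : ℕ) (hn : 1 ≤ n)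
    (c1 c2 c3 : ℕ) (h1 : 1 ≤ c1) (h2 : 1 ≤ c2)
    (h13 : c1 ≤ c3) (h23 : c2 ≤ c3) (h3 : c3 ≤ c1 + c2) (h3n : c3 = n) :
    ∃ H : Subgroup (GL (Fin 3) (ZMod (p ^ n))),
      (H : Set (GL (Fin 3) (ZMod (p ^ n)))) =
        {g : GL (Fin 3) (ZMod (p ^ n)) |
          (p : ZMod (p ^ n))^c1 ∣ (g : Matrix (Fin 3) (Fin 3) (ZMod (p ^ n))) 1 0 ∧
          (p : ZMod (p ^ n))^c2 ∣ (g : Matrix (Fin 3) (Fin 3) (ZMod (p ^ n))) 2 1 ∧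
          (p : ZMod (p ^ n))^c3 ∣ (g : Matrix (Fin 3) (Fin 3) (ZMod (p ^ n))) 2 0} ∧
      H.index = (p + 1) * (p ^ 2 + p + 1) * p ^ (c1 + c2 + c3 - 3) := by
  haveI : NeZero (p ^ n) := ⟨pow_ne_zero _ hp.pos.ne'⟩
  haveI : Fact p.Prime := ⟨hp⟩
  set R := ZMod (p ^ n) with hR
  set cond : Matrix (Fin 3) (Fin 3) R → Prop := fun M =>
    (p : R)^c1 ∣ M 1 0 ∧ (p : R)^c2 ∣ M 2 1 ∧ (p : R)^c3 ∣ M 2 0 with hcond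
  have hmul : ∀ A B : Matrix (Fin 3) (Fin 3) R, cond A → cond B → cond (A * B) := by
    rintro A B ⟨ha1, ha2, ha3⟩ ⟨hb1, hb2, hb3⟩
    refine ⟨?_, ?_, ?_⟩ <;> rw [Matrix.mul_apply, Fin.sum_univ_three]
    · exact dvd_add (dvd_add (ha1.mul_right _) (hb1.mul_left _))
        (((pow_dvd_pow _ h13).trans hb3).mul_left _)
    · exact dvd_add (dvd_add (((pow_dvd_pow _ h23).trans ha3).mul_right _)
        (ha2.mul_right _)) (hb2.mul_left _)
    · refine dvd_add (dvd_add (ha3.mul_right _) ?_) (hb3.mul_left _)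
      have : (p : R)^c3 ∣ (p : R)^(c2 + c1) := pow_dvd_pow _ (by omega)
      exact this.trans (by rw [pow_add]; exact mul_dvd_mul ha2 hb1)
  have hcond_mem : ∀ g : GL (Fin 3) R, cond (g : Matrix (Fin 3) (Fin 3) R) →
      ∀ h : GL (Fin 3) R, cond (h : Matrix (Fin 3) (Fin 3) R) →
      cond ((g * h : GL (Fin 3) R) : Matrix (Fin 3) (Fin 3) R) := by
    intro g hg h hh
    have : ((g * h : GL (Fin 3) R) : Matrix (Fin 3) (Fin 3) R) =
        (g : Matrix (Fin 3) (Fin 3) R) * (h : Matrix (Fin 3) (Fin 3) R) := rfl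
    rw [this]; exact hmul _ _ hg hh
  have hinv : ∀ x : GL (Fin 3) R, cond (x : Matrix (Fin 3) (Fin 3) R) →
      cond ((x⁻¹ : GL (Fin 3) R) : Matrix (Fin 3) (Fin 3) R) := by
    intro x hx
    have hpow : ∀ k : ℕ, cond ((x ^ (k + 1) : GL (Fin 3) R) : Matrix (Fin 3) (Fin 3) R) := by
      intro k
      induction k with
      | zero => simpa using hx
      | succ m ih =>
        have h : x ^ (m + 1 + 1) = x ^ (m + 1) * x := by rw [pow_succ]
        rw [h]
        exact hcond_mem _ ih _ hx
    have ho : 1 ≤ orderOf x := orderOf_pos x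
    have hx1 : x ^ (2 * orderOf x - 1) * x = 1 := by
      rw [← pow_succ]
      have he : 2 * orderOf x - 1 + 1 = orderOf x + orderOf x := by omega
      rw [he, pow_add, pow_orderOf_eq_one, one_mul]
    have hxi : x⁻¹ = x ^ (2 * orderOf x - 1) := (eq_inv_of_mul_eq_one_left hx1).symm
    rw [hxi]
    have he2 : 2 * orderOf x - 1 = (2 * orderOf x - 2) + 1 := by omega
    rw [he2]
    exact hpow _
  have hone : cond ((1 : GL (Fin 3) R) : Matrix (Fin 3) (Fin 3) R) := by
    refine ⟨?_, ?_, ?_⟩ <;> simp [Matrix.one_apply]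
  refine ⟨{ carrier := {g : GL (Fin 3) R | cond (g : Matrix (Fin 3) (Fin 3) R)}
            one_mem' := hone
            mul_mem' := fun {a b} ha hb => hcond_mem a ha b hb
            inv_mem' := fun {x} hx => hinv x hx }, rfl, ?_⟩
  set H : Subgroup (GL (Fin 3) R) :=
    { carrier := {g : GL (Fin 3) R | cond (g : Matrix (Fin 3) (Fin 3) R)}
      one_mem' := hone
      mul_mem' := fun {a b} ha hb => hcond_mem a ha b hb
      inv_mem' := fun {x} hx => hinv x hx } with hH
  have hHc : Nat.card ↥H =
      (p ^ (n-1) * (p-1))^3 * (p ^ n)^3 * p ^ (n - c1) * p ^ (n - c2) * p ^ (n - c3) := by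
    have e : ↥H ≃ {g : GL (Fin 3) R //
        (p : R)^c1 ∣ (g : Matrix (Fin 3) (Fin 3) R) 1 0 ∧
        (p : R)^c2 ∣ (g : Matrix (Fin 3) (Fin 3) R) 2 1 ∧
        (p : R)^c3 ∣ (g : Matrix (Fin 3) (Fin 3) R) 2 0} :=
      Equiv.subtypeEquivRight (fun g => Iff.rfl)
    rw [Nat.card_congr e]
    exact card_cond hp hn h1 h2 (le_trans h1 h13) (by omega) (by omega) (le_of_eq h3n)
  have hkey := Subgroup.index_mul_card H
  rw [hHc, card_GL_zmod hp hn] at hkey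
  have harith := arith p n c1 c2 c3 hp.two_le hn h1 h2 h13 h23 h3n
  have hpos : 0 < (p ^ (n-1) * (p-1))^3 * (p ^ n)^3 * p ^ (n - c1) * p ^ (n - c2) *
      p ^ (n - c3) := by
    have h0 : 0 < p := hp.pos
    have h1' : 0 < p - 1 := by have := hp.two_le; omega
    exact Nat.mul_pos (Nat.mul_pos (Nat.mul_pos (Nat.mul_pos
      (pow_pos (Nat.mul_pos (pow_pos h0 _) h1') 3) (pow_pos (pow_pos h0 n) 3))
      (pow_pos h0 _)) (pow_pos h0 _)) (pow_pos h0 _)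
  exact Nat.eq_of_mul_eq_mul_right hpos (hkey.trans harith.symm)
end
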